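/- arXiv:1704.00820 — 2 statements merged into one kernel-verified Lean document; each statement's English description precedes it below -/
import Mathlib

section
/- Let B → X → Y → B̂ with B, B̂ binary, Pr[B=0] = a, Pr[B̂=0] = b. Then the error probability Pr[B ≠ B̂] ≥ a + b − 2ab − 2ρ_m(X;Y)√(a(1−a)b(1−b)). -/
open Finset Real

/-- Maximal correlation of a joint pmf `r` on `α × β`: the supremum of
`E[f(X)g(Y)]` over zero-mean, unit-second-moment `f`, `g`. -/
noncomputable def maxCorr {α β : Type*} [Fintype α] [Fintype β]
    (r : α → β → ℝ) : ℝ :=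
  sSup { t : ℝ | ∃ f : α → ℝ, ∃ g : β → ℝ,
    (∑ x, ∑ y, f x * r x y) = 0 ∧ (∑ x, ∑ y, g y * r x y) = 0 ∧
    (∑ x, ∑ y, (f x) ^ 2 * r x y) = 1 ∧ (∑ x, ∑ y, (g y) ^ 2 * r x y) = 1 ∧
    t = ∑ x, ∑ y, f x * g y * r x y }

/-- Cauchy–Schwarz for a nonnegative weight. -/
lemma cs_double {α β : Type*} [Fintype α] [Fintype β]
    (r : α → β → ℝ) (hr0 : ∀ x y, 0 ≤ r x y) (f : α → ℝ) (g : β → ℝ) :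
    (∑ x, ∑ y, f x * g y * r x y) ^ 2 ≤
      (∑ x, ∑ y, (f x) ^ 2 * r x y) * (∑ x, ∑ y, (g y) ^ 2 * r x y) := by
  have h1 : (∑ x, ∑ y, f x * g y * r x y) =
      ∑ p : α × β, (f p.1 * Real.sqrt (r p.1 p.2)) * (g p.2 * Real.sqrt (r p.1 p.2)) := by
    rw [Fintype.sum_prod_type]
    refine Finset.sum_congr rfl fun x _ => Finset.sum_congr rfl fun y _ => ?_
    linear_combination (-(f x * g y)) * Real.mul_self_sqrt (hr0 x y)
  have h2 : (∑ x, ∑ y, (f x) ^ 2 * r x y) =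
      ∑ p : α × β, (f p.1 * Real.sqrt (r p.1 p.2)) ^ 2 := by
    rw [Fintype.sum_prod_type]
    refine Finset.sum_congr rfl fun x _ => Finset.sum_congr rfl fun y _ => ?_
    rw [mul_pow, Real.sq_sqrt (hr0 x y)]
  have h3 : (∑ x, ∑ y, (g y) ^ 2 * r x y) =
      ∑ p : α × β, (g p.2 * Real.sqrt (r p.1 p.2)) ^ 2 := by
    rw [Fintype.sum_prod_type]
    refine Finset.sum_congr rfl fun x _ => Finset.sum_congr rfl fun y _ => ?_
    rw [mul_pow, Real.sq_sqrt (hr0 x y)]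
  rw [h1, h2, h3]
  exact Finset.sum_mul_sq_le_sq_mul_sq _ _ _

lemma maxCorr_bddAbove {α β : Type*} [Fintype α] [Fintype β]
    (r : α → β → ℝ) (hr0 : ∀ x y, 0 ≤ r x y) :
    BddAbove { t : ℝ | ∃ f : α → ℝ, ∃ g : β → ℝ,
      (∑ x, ∑ y, f x * r x y) = 0 ∧ (∑ x, ∑ y, g y * r x y) = 0 ∧
      (∑ x, ∑ y, (f x) ^ 2 * r x y) = 1 ∧ (∑ x, ∑ y, (g y) ^ 2 * r x y) = 1 ∧
      t = ∑ x, ∑ y, f x * g y * r x y } := by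
  refine ⟨1, fun t ht => ?_⟩
  obtain ⟨f, g, _, _, hf2, hg2, hts⟩ := ht
  have := cs_double r hr0 f g
  rw [hf2, hg2, ← hts] at this
  nlinarith

lemma maxCorr_nonneg {α β : Type*} [Fintype α] [Fintype β]
    (r : α → β → ℝ) (hr0 : ∀ x y, 0 ≤ r x y) : 0 ≤ maxCorr r := by
  set S := { t : ℝ | ∃ f : α → ℝ, ∃ g : β → ℝ,
    (∑ x, ∑ y, f x * r x y) = 0 ∧ (∑ x, ∑ y, g y * r x y) = 0 ∧
    (∑ x, ∑ y, (f x) ^ 2 * r x y) = 1 ∧ (∑ x, ∑ y, (g y) ^ 2 * r x y) = 1 ∧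
    t = ∑ x, ∑ y, f x * g y * r x y } with hS
  rcases Set.eq_empty_or_nonempty S with h | ⟨t, ht⟩
  · simp only [maxCorr, ← hS, h, Real.sSup_empty]
    exact le_rfl
  · obtain ⟨f, g, hf1, hg1, hf2, hg2, hts⟩ := ht
    have hmem : -t ∈ S := by
      refine ⟨f, fun y => -(g y), hf1, ?_, hf2, ?_, ?_⟩
      · simp only [neg_mul]
        rw [show (∑ x, ∑ y, -(g y * r x y)) = -(∑ x, ∑ y, g y * r x y) by
          simp [Finset.sum_neg_distrib]]
        rw [hg1, neg_zero]
      · simpa using hg2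
      · show -t = ∑ x, ∑ y, f x * -(g y) * r x y
        have hre : (∑ x, ∑ y, f x * -(g y) * r x y) =
            -∑ x, ∑ y, f x * g y * r x y := by
          rw [← Finset.sum_neg_distrib]
          refine Finset.sum_congr rfl fun x _ => ?_
          rw [← Finset.sum_neg_distrib]
          exact Finset.sum_congr rfl fun y _ => by ring
        rw [hts, hre]
    have hb := maxCorr_bddAbove r hr0
    have h1 : t ≤ maxCorr r := le_csSup hb (hS ▸ ⟨f, g, hf1, hg1, hf2, hg2, hts⟩)
    have h2 : -t ≤ maxCorr r := le_csSup hb hmem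
    linarith

/-- Witsenhausen-type bound: for binary `B, B̂` with `B → X → Y → B̂`,
`Pr[B=0] = a`, `Pr[B̂=0] = b` (with `true` encoding the symbol `0`),
`Pr[B ≠ B̂] ≥ a + b − 2ab − 2ρₘ(X;Y)√(a(1−a)b(1−b))`. -/
theorem error_prob_lower_bound {α β : Type*} [Fintype α] [Fintype β]
    (r : α → β → ℝ) (hr0 : ∀ x y, 0 ≤ r x y) (hr1 : ∑ x, ∑ y, r x y = 1)
    (u : α → Bool → ℝ) (hu0 : ∀ x c, 0 ≤ u x c)
    (hu1 : ∀ x, u x false + u x true = 1)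
    (w : β → Bool → ℝ) (hw0 : ∀ y c, 0 ≤ w y c)
    (hw1 : ∀ y, w y false + w y true = 1)
    (a b : ℝ)
    (ha : a = ∑ x, ∑ y, r x y * u x true)
    (hb : b = ∑ x, ∑ y, r x y * w y true) :
    (∑ x, ∑ y, r x y * (u x true * w y false + u x false * w y true)) ≥
      a + b - 2 * a * b -
        2 * maxCorr r * Real.sqrt (a * (1 - a) * (b * (1 - b))) := by
  have hρ0 : 0 ≤ maxCorr r := maxCorr_nonneg r hr0
  set ρ : ℝ := maxCorr r with hρ
  set C : ℝ := ∑ x, ∑ y, r x y * (u x true * w y true) with hC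
  set f : α → ℝ := fun x => u x true - a with hfdef
  set g : β → ℝ := fun y => w y true - b with hgdef
  have hut1 : ∀ x, u x true ≤ 1 := fun x => by have := hu0 x false; linarith [hu1 x]
  have hwt1 : ∀ y, w y true ≤ 1 := fun y => by have := hw0 y false; linarith [hw1 y]
  -- error sum identity
  have herr : (∑ x, ∑ y, r x y * (u x true * w y false + u x false * w y true)) =
      a + b - 2 * C := by
    have step : ∀ x : α, ∀ y : β,
        r x y * (u x true * w y false + u x false * w y true) =
        (r x y * u x true + r x y * w y true) - 2 * (r x y * (u x true * w y true)) := by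
      intro x y
      have h1 : u x false = 1 - u x true := by linarith [hu1 x]
      have h2 : w y false = 1 - w y true := by linarith [hw1 y]
      rw [h1, h2]; ring
    simp only [step, Finset.sum_add_distrib, Finset.sum_sub_distrib, ← Finset.mul_sum]
    rw [← ha, ← hb, ← hC]
  -- mean zero
  have hf1 : (∑ x, ∑ y, f x * r x y) = 0 := by
    have step : ∀ x : α, ∀ y : β, f x * r x y = r x y * u x true - a * r x y := by
      intro x y; simp only [hfdef]; ring
    simp_rw [step, Finset.sum_sub_distrib, ← Finset.mul_sum]
    rw [← ha, hr1]; ring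
  have hg1 : (∑ x, ∑ y, g y * r x y) = 0 := by
    have step : ∀ x : α, ∀ y : β, g y * r x y = r x y * w y true - b * r x y := by
      intro x y; simp only [hgdef]; ring
    simp_rw [step, Finset.sum_sub_distrib, ← Finset.mul_sum]
    rw [← hb, hr1]; ring
  -- second moments
  set p : ℝ := ∑ x, ∑ y, (f x) ^ 2 * r x y with hpdef
  set q : ℝ := ∑ x, ∑ y, (g y) ^ 2 * r x y with hqdef
  have hp0 : 0 ≤ p := by
    rw [hpdef]
    refine Finset.sum_nonneg fun x _ => Finset.sum_nonneg fun y _ => ?_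
    exact mul_nonneg (sq_nonneg _) (hr0 x y)
  have hq0 : 0 ≤ q := by
    rw [hqdef]
    refine Finset.sum_nonneg fun x _ => Finset.sum_nonneg fun y _ => ?_
    exact mul_nonneg (sq_nonneg _) (hr0 x y)
  have hple : p ≤ a * (1 - a) := by
    have step : ∀ x : α, ∀ y : β, (f x) ^ 2 * r x y =
        (u x true) ^ 2 * r x y - (2 * a) * (r x y * u x true) + (a ^ 2) * r x y := by
      intro x y; simp only [hfdef]; ring
    have hbound : (∑ x, ∑ y, (u x true) ^ 2 * r x y) ≤ ∑ x, ∑ y, r x y * u x true := by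
      refine Finset.sum_le_sum fun x _ => Finset.sum_le_sum fun y _ => ?_
      nlinarith [mul_nonneg (mul_nonneg (hu0 x true) (sub_nonneg.mpr (hut1 x))) (hr0 x y)]
    rw [hpdef]
    simp only [step, Finset.sum_add_distrib, Finset.sum_sub_distrib, ← Finset.mul_sum]
    simp only [← Finset.mul_sum] at hbound
    rw [← ha, hr1]
    linarith only [hbound, ha]
  have hqle : q ≤ b * (1 - b) := by
    have step : ∀ x : α, ∀ y : β, (g y) ^ 2 * r x y =
        (w y true) ^ 2 * r x y - (2 * b) * (r x y * w y true) + (b ^ 2) * r x y := by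
      intro x y; simp only [hgdef]; ring
    have hbound : (∑ x, ∑ y, (w y true) ^ 2 * r x y) ≤ ∑ x, ∑ y, r x y * w y true := by
      refine Finset.sum_le_sum fun x _ => Finset.sum_le_sum fun y _ => ?_
      nlinarith [mul_nonneg (mul_nonneg (hw0 y true) (sub_nonneg.mpr (hwt1 y))) (hr0 x y)]
    rw [hqdef]
    simp only [step, Finset.sum_add_distrib, Finset.sum_sub_distrib, ← Finset.mul_sum]
    rw [← hb, hr1]
    linarith only [hbound, hb]
  -- covariance
  set S : ℝ := ∑ x, ∑ y, f x * g y * r x y with hSdef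
  have hScov : S = C - a * b := by
    have step : ∀ x : α, ∀ y : β, f x * g y * r x y =
        r x y * (u x true * w y true) - b * (r x y * u x true)
          - a * (r x y * w y true) + (a * b) * r x y := by
      intro x y; simp only [hfdef, hgdef]; ring
    rw [hSdef]
    simp only [step, Finset.sum_add_distrib, Finset.sum_sub_distrib, ← Finset.mul_sum]
    rw [← ha, ← hb, ← hC, hr1]
    ring
  have hK : 0 ≤ a * (1 - a) * (b * (1 - b)) := by
    have h1 : 0 ≤ a * (1 - a) := le_trans hp0 hple
    have h2 : 0 ≤ b * (1 - b) := le_trans hq0 hqle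
    exact mul_nonneg h1 h2
  have hsqrtK : Real.sqrt (a * (1 - a)) * Real.sqrt (b * (1 - b)) =
      Real.sqrt (a * (1 - a) * (b * (1 - b))) :=
    (Real.sqrt_mul (le_trans hp0 hple) _).symm
  -- main claim
  have hmain : S ≤ ρ * Real.sqrt (a * (1 - a) * (b * (1 - b))) := by
    rcases eq_or_lt_of_le hp0 with hp | hp
    · -- p = 0
      have hcs := cs_double r hr0 f g
      rw [← hSdef, ← hpdef, ← hqdef, ← hp] at hcs
      have : S ≤ 0 := by nlinarith
      have : 0 ≤ ρ * Real.sqrt (a * (1 - a) * (b * (1 - b))) :=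
        mul_nonneg hρ0 (Real.sqrt_nonneg _)
      linarith
    rcases eq_or_lt_of_le hq0 with hq | hq
    · have hcs := cs_double r hr0 f g
      rw [← hSdef, ← hpdef, ← hqdef, ← hq] at hcs
      have : S ≤ 0 := by nlinarith
      have : 0 ≤ ρ * Real.sqrt (a * (1 - a) * (b * (1 - b))) :=
        mul_nonneg hρ0 (Real.sqrt_nonneg _)
      linarith
    -- both positive
    have hsp : 0 < Real.sqrt p := Real.sqrt_pos.mpr hp
    have hsq : 0 < Real.sqrt q := Real.sqrt_pos.mpr hq
    have hspne : Real.sqrt p ≠ 0 := ne_of_gt hsp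
    have hsqne : Real.sqrt q ≠ 0 := ne_of_gt hsq
    have hmem : S / (Real.sqrt p * Real.sqrt q) ∈ { t : ℝ | ∃ f : α → ℝ, ∃ g : β → ℝ,
        (∑ x, ∑ y, f x * r x y) = 0 ∧ (∑ x, ∑ y, g y * r x y) = 0 ∧
        (∑ x, ∑ y, (f x) ^ 2 * r x y) = 1 ∧ (∑ x, ∑ y, (g y) ^ 2 * r x y) = 1 ∧
        t = ∑ x, ∑ y, f x * g y * r x y } := by
      refine ⟨fun x => f x / Real.sqrt p, fun y => g y / Real.sqrt q, ?_, ?_, ?_, ?_, ?_⟩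
      · show (∑ x, ∑ y, f x / Real.sqrt p * r x y) = 0
        simp only [div_mul_eq_mul_div, ← Finset.sum_div]
        rw [hf1, zero_div]
      · show (∑ x, ∑ y, g y / Real.sqrt q * r x y) = 0
        simp only [div_mul_eq_mul_div, ← Finset.sum_div]
        rw [hg1, zero_div]
      · show (∑ x, ∑ y, (f x / Real.sqrt p) ^ 2 * r x y) = 1
        simp only [div_pow, div_mul_eq_mul_div, ← Finset.sum_div]
        rw [← hpdef, Real.sq_sqrt hp0, div_self (ne_of_gt hp)]
      · show (∑ x, ∑ y, (g y / Real.sqrt q) ^ 2 * r x y) = 1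
        simp only [div_pow, div_mul_eq_mul_div, ← Finset.sum_div]
        rw [← hqdef, Real.sq_sqrt hq0, div_self (ne_of_gt hq)]
      · have step : ∀ x : α, ∀ y : β,
            (f x / Real.sqrt p) * (g y / Real.sqrt q) * r x y =
            (f x * g y * r x y) / (Real.sqrt p * Real.sqrt q) := by
          intro x y; field_simp
        show S / (Real.sqrt p * Real.sqrt q) =
          ∑ x, ∑ y, f x / Real.sqrt p * (g y / Real.sqrt q) * r x y
        simp only [step, ← Finset.sum_div]
        rfl
    have hle : S / (Real.sqrt p * Real.sqrt q) ≤ ρ :=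
      le_csSup (maxCorr_bddAbove r hr0) hmem
    have hSle : S ≤ ρ * (Real.sqrt p * Real.sqrt q) :=
      (div_le_iff₀ (by positivity)).mp hle
    have hsple : Real.sqrt p ≤ Real.sqrt (a * (1 - a)) := Real.sqrt_le_sqrt hple
    have hsqle : Real.sqrt q ≤ Real.sqrt (b * (1 - b)) := Real.sqrt_le_sqrt hqle
    have : Real.sqrt p * Real.sqrt q ≤
        Real.sqrt (a * (1 - a)) * Real.sqrt (b * (1 - b)) := by
      apply mul_le_mul hsple hsqle (le_of_lt hsq) (Real.sqrt_nonneg _)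
    rw [← hsqrtK]
    nlinarith only [hSle, this, hρ0, Real.sqrt_nonneg p, Real.sqrt_nonneg q]
  rw [herr]
  have hCab : C = a * b + S := by rw [hScov]; ring
  rw [hCab]
  linarith only [hmain]
end

section
/- Let S, X be discrete finite random variables and suppose there is f: 𝒳 → ℝ with E[f(X)] = 0, ‖f(X)‖₂ = 1, and E[f(X)|S=s] = 0 for all s. Let ε = 1/(2·max_x |f(x)|) and define p_{Y|X}(1|x) = 1/2 − ε f(x), p_{Y|X}(2|x) = 1/2 + ε f(x). Then Y is independent of S, and I(X;Y) = 1 − Σ_x p_X(x) h_b(1/2 + ε f(x)) > 0 (in bits). -/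
open Finset Real

noncomputable def binEnt (x : ℝ) : ℝ :=
  -(x * Real.logb 2 x) - (1 - x) * Real.logb 2 (1 - x)

lemma binEnt_eq (t : ℝ) : binEnt t = Real.binEntropy t / Real.log 2 := by
  simp [binEnt, Real.binEntropy, Real.logb, Real.log_inv]
  ring

lemma mul_logb_two_mul (a : ℝ) : a * Real.logb 2 (2 * a) = a + a * Real.logb 2 a := by
  rcases eq_or_ne a 0 with h | h
  · simp [h]
  · have h2 : Real.logb 2 2 = 1 := by simp
    rw [Real.logb_mul two_ne_zero h, h2]
    ring

lemma perx (q t : ℝ) (hq : q ≠ 0) :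
    q * (1 - t) * Real.logb 2 ((q * (1 - t)) / (q * (1 / 2))) +
      q * t * Real.logb 2 ((q * t) / (q * (1 / 2))) = q * (1 - binEnt t) := by
  have h1 : (q * (1 - t)) / (q * (1 / 2)) = 2 * (1 - t) := by
    field_simp
  have h2 : (q * t) / (q * (1 / 2)) = 2 * t := by
    field_simp
  rw [h1, h2]
  unfold binEnt
  linear_combination q * mul_logb_two_mul (1 - t) + q * mul_logb_two_mul t

lemma binEnt_le_one (t : ℝ) : binEnt t ≤ 1 := by
  rw [binEnt_eq, div_le_one (Real.log_pos one_lt_two)]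
  exact Real.binEntropy_le_log_two

lemma binEnt_lt_one (t : ℝ) (ht : t ≠ 1 / 2) : binEnt t < 1 := by
  rw [binEnt_eq, div_lt_one (Real.log_pos one_lt_two)]
  exact Real.binEntropy_lt_log_two.2 (by rw [← one_div]; exact ht)

/-- Explicit perfect-privacy construction: given `f` with `E[f(X)] = 0`,
`‖f(X)‖₂ = 1` and `E[f(X)|S = s] = 0` for all `s`, let `ε = 1/(2 maxₓ|f(x)|)`
and let the binary channel be `W x false = 1/2 − ε f(x)`, `W x true = 1/2 + ε f(x)`.
Then `Y` is independent of `S`, and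
`I(X;Y) = 1 − ∑ₓ p_X(x) h_b(1/2 + ε f(x)) > 0` (in bits). -/
theorem explicit_perfect_privacy_mapping
    {σ α : Type*} [Fintype σ] [Fintype α] [Nonempty α]
    (p : σ → α → ℝ) (hp0 : ∀ s x, 0 ≤ p s x) (hp1 : ∑ s, ∑ x, p s x = 1)
    (hX : ∀ x, 0 < ∑ s, p s x)
    (f : α → ℝ)
    (hmean : ∑ x, (∑ s, p s x) * f x = 0)
    (hvar : ∑ x, (∑ s, p s x) * (f x) ^ 2 = 1)
    (horth : ∀ s, ∑ x, p s x * f x = 0)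
    (ε : ℝ) (hε : ε = 1 / (2 * univ.sup' univ_nonempty fun x => |f x|))
    (W : α → Bool → ℝ)
    (hWf : ∀ x, W x false = 1 / 2 - ε * f x)
    (hWt : ∀ x, W x true = 1 / 2 + ε * f x) :
    (∀ s y, (∑ x, p s x * W x y) =
        (∑ x, p s x) * ∑ x', (∑ s', p s' x') * W x' y) ∧
      (∑ x, ∑ y : Bool, (∑ s, p s x) * W x y *
          Real.logb 2 (((∑ s, p s x) * W x y) /
            ((∑ s, p s x) * ∑ x', (∑ s, p s x') * W x' y))) =
        1 - ∑ x, (∑ s, p s x) * binEnt (1 / 2 + ε * f x) ∧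
      0 < ∑ x, ∑ y : Bool, (∑ s, p s x) * W x y *
          Real.logb 2 (((∑ s, p s x) * W x y) /
            ((∑ s, p s x) * ∑ x', (∑ s, p s x') * W x' y)) := by
  rw [Finset.sum_comm] at hp1
  -- marginal of Y is uniform
  have hmarg : ∀ y : Bool, (∑ x', (∑ s, p s x') * W x' y) = 1 / 2 := by
    intro y
    cases y
    · simp only [hWf]
      have h : ∑ x, (∑ s, p s x) * (1 / 2 - ε * f x)
          = (∑ x, (∑ s, p s x)) * (1 / 2) - ε * ∑ x, (∑ s, p s x) * f x := by
        rw [Finset.sum_mul, Finset.mul_sum, ← Finset.sum_sub_distrib]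
        exact Finset.sum_congr rfl fun x _ => by ring
      rw [h, hp1, hmean]; ring
    · simp only [hWt]
      have h : ∑ x, (∑ s, p s x) * (1 / 2 + ε * f x)
          = (∑ x, (∑ s, p s x)) * (1 / 2) + ε * ∑ x, (∑ s, p s x) * f x := by
        rw [Finset.sum_mul, Finset.mul_sum, ← Finset.sum_add_distrib]
        exact Finset.sum_congr rfl fun x _ => by ring
      rw [h, hp1, hmean]; ring
  -- the mutual information identity
  have key : (∑ x, ∑ y : Bool, (∑ s, p s x) * W x y *
          Real.logb 2 (((∑ s, p s x) * W x y) /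
            ((∑ s, p s x) * ∑ x', (∑ s, p s x') * W x' y)))
      = ∑ x, (∑ s, p s x) * (1 - binEnt (1 / 2 + ε * f x)) := by
    refine Finset.sum_congr rfl fun x _ => ?_
    rw [Fintype.sum_bool, hmarg, hmarg, hWf, hWt]
    have h := perx (∑ s, p s x) (1 / 2 + ε * f x) (hX x).ne'
    rw [show (1 : ℝ) - (1 / 2 + ε * f x) = 1 / 2 - ε * f x from by ring] at h
    linarith
  have key2 : (∑ x, (∑ s, p s x) * (1 - binEnt (1 / 2 + ε * f x)))
      = 1 - ∑ x, (∑ s, p s x) * binEnt (1 / 2 + ε * f x) := by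
    calc ∑ x, (∑ s, p s x) * (1 - binEnt (1 / 2 + ε * f x))
        = ∑ x, ((∑ s, p s x) - (∑ s, p s x) * binEnt (1 / 2 + ε * f x)) :=
          Finset.sum_congr rfl fun x _ => by ring
      _ = (∑ x, (∑ s, p s x)) - ∑ x, (∑ s, p s x) * binEnt (1 / 2 + ε * f x) :=
          Finset.sum_sub_distrib _ _
      _ = _ := by rw [hp1]
  refine ⟨?_, key.trans key2, ?_⟩
  · intro s y
    rw [hmarg y]
    cases y
    · simp only [hWf]
      have h : ∑ x, p s x * (1 / 2 - ε * f x)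
          = (∑ x, p s x) * (1 / 2) - ε * ∑ x, p s x * f x := by
        rw [Finset.sum_mul, Finset.mul_sum, ← Finset.sum_sub_distrib]
        exact Finset.sum_congr rfl fun x _ => by ring
      rw [h, horth s]; ring
    · simp only [hWt]
      have h : ∑ x, p s x * (1 / 2 + ε * f x)
          = (∑ x, p s x) * (1 / 2) + ε * ∑ x, p s x * f x := by
        rw [Finset.sum_mul, Finset.mul_sum, ← Finset.sum_add_distrib]
        exact Finset.sum_congr rfl fun x _ => by ring
      rw [h, horth s]; ring
  · rw [key]
    -- there is some x with f x ≠ 0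
    obtain ⟨x₀, hx₀⟩ : ∃ x, f x ≠ 0 := by
      by_contra hc
      push_neg at hc
      rw [Finset.sum_eq_zero (fun x _ => by rw [hc x]; ring)] at hvar
      norm_num at hvar
    have hM : 0 < univ.sup' univ_nonempty fun x => |f x| :=
      lt_of_lt_of_le (abs_pos.2 hx₀) (Finset.le_sup' (fun x => |f x|) (mem_univ x₀))
    have hεpos : 0 < ε := by rw [hε]; positivity
    apply Finset.sum_pos'
    · intro x _
      have := binEnt_le_one (1 / 2 + ε * f x)
      nlinarith [(hX x).le]
    · refine ⟨x₀, mem_univ _, ?_⟩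
      have hne : (1 / 2 : ℝ) + ε * f x₀ ≠ 1 / 2 := by
        intro h
        apply hx₀
        have : ε * f x₀ = 0 := by linarith
        exact (mul_eq_zero.1 this).resolve_left hεpos.ne'
      have := binEnt_lt_one _ hne
      nlinarith [hX x₀]
end
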